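/- For every natural number N ≥ 1, every real p ≥ 1, and every nonzero vector c ∈ ℝ^N with coefficients sorted in ascending order 0 ≤ c_1 ≤ c_2 ≤ … ≤ c_N, the Generalised Differential Sparsity satisfies 0 ≤ S_p(c) ≤ 1 − 1/N. -/

import Mathlib

open Finset

/-- Generalised Differential Sparsity of order `p` of a vector `c ∈ ℝ^N`
(coefficients assumed sorted in ascending order):
`S_p(c) = (1/(N · Σ_i c_i^p)) · Σ_{i<j} (c_j − c_i)^p`. -/
noncomputable def gds (N : ℕ) (p : ℝ) (c : Fin N → ℝ) : ℝ :=
  (1 / (N * ∑ i, c i ^ p)) *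
    ∑ i : Fin N, ∑ j : Fin N, if i < j then (c j - c i) ^ p else 0

theorem gds_range (N : ℕ) (hN : 1 ≤ N) (p : ℝ) (hp : 1 ≤ p)
    (c : Fin N → ℝ) (hc0 : ∀ i, 0 ≤ c i) (hmono : Monotone c) (hne : c ≠ 0) :
    0 ≤ gds N p c ∧ gds N p c ≤ 1 - 1 / N := by
  have hNpos : (0:ℝ) < N := by exact_mod_cast hN
  have hDpos : 0 < ∑ i, c i ^ p := by
    obtain ⟨k, hk⟩ : ∃ k, c k ≠ 0 := by
      by_contra h; push_neg at h; exact hne (funext h)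
    have hck : 0 < c k := lt_of_le_of_ne (hc0 k) (Ne.symm hk)
    exact Finset.sum_pos' (fun i _ => Real.rpow_nonneg (hc0 i) p)
      ⟨k, Finset.mem_univ k, Real.rpow_pos_of_pos hck p⟩
  have hden : 0 < (N:ℝ) * ∑ i, c i ^ p := mul_pos hNpos hDpos
  have hSnn : 0 ≤ ∑ i : Fin N, ∑ j : Fin N, if i < j then (c j - c i) ^ p else 0 := by
    refine Finset.sum_nonneg fun i _ => Finset.sum_nonneg fun j _ => ?_
    split
    · exact Real.rpow_nonneg (sub_nonneg.2 (hmono (le_of_lt (by assumption)))) p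
    · exact le_refl 0
  constructor
  · exact mul_nonneg (le_of_lt (one_div_pos.2 hden)) hSnn
  · rw [gds, one_div_mul_eq_div, div_le_iff₀ hden]
    have key : (∑ i : Fin N, ∑ j : Fin N, if i < j then (c j - c i) ^ p else 0)
        ≤ ((N:ℝ) - 1) * ∑ i, c i ^ p := by
      calc (∑ i : Fin N, ∑ j : Fin N, if i < j then (c j - c i) ^ p else 0)
          ≤ ∑ i : Fin N, ∑ j : Fin N, (if i < j then (c j) ^ p else 0) := by
            refine Finset.sum_le_sum fun i _ => Finset.sum_le_sum fun j _ => ?_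
            split
            · exact Real.rpow_le_rpow (sub_nonneg.2 (hmono (le_of_lt ‹_›)))
                (by linarith [hc0 i]) (by linarith)
            · exact le_refl 0
        _ = ∑ j : Fin N, ∑ i : Fin N, (if i < j then (c j)^p else 0) := Finset.sum_comm
        _ = ∑ j : Fin N, ((univ.filter fun i => i < j).card : ℝ) * (c j)^p := by
            refine Finset.sum_congr rfl fun j _ => ?_
            rw [← Finset.sum_filter, Finset.sum_const, nsmul_eq_mul]
        _ ≤ ∑ j : Fin N, ((N:ℝ) - 1) * (c j)^p := by
            refine Finset.sum_le_sum fun j _ => ?_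
            refine mul_le_mul_of_nonneg_right ?_ (Real.rpow_nonneg (hc0 j) p)
            have hcard : (univ.filter fun i => i < j).card ≤ N - 1 := by
              have hsub : (univ.filter fun i => i < j) ⊆ univ.erase j := by
                intro i hi
                simp only [Finset.mem_filter] at hi
                exact Finset.mem_erase.2 ⟨ne_of_lt hi.2, Finset.mem_univ i⟩
              calc (univ.filter fun i => i < j).card
                  ≤ (univ.erase j).card := Finset.card_le_card hsub
                _ = N - 1 := by
                    rw [Finset.card_erase_of_mem (Finset.mem_univ j),
                      Finset.card_univ, Fintype.card_fin]
            calc ((univ.filter fun i => i < j).card : ℝ)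
                ≤ ((N - 1 : ℕ) : ℝ) := by exact_mod_cast hcard
              _ ≤ (N:ℝ) - 1 := by rw [Nat.cast_sub hN]; simp
        _ = ((N:ℝ)-1) * ∑ i, c i ^ p := by rw [← Finset.mul_sum]
    calc (∑ i : Fin N, ∑ j : Fin N, if i < j then (c j - c i) ^ p else 0)
        ≤ ((N:ℝ)-1) * ∑ i, c i ^ p := key
      _ = (1 - 1/N) * ((N:ℝ) * ∑ i, c i ^ p) := by field_simp
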